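/- Let x₀, y_m be vector fields and Ωₙ, ζₙ structures satisfying: ζₙ := i_{xₙ}Ω₀ where xₙ = Rⁿx₀, the forms ζₙ are closed (dζₙ = 0), and the Lie derivative relation L_{yₘ}ζₙ = (1 − m − n) ζ_{m+n} holds for m ≥ 1, n ≥ 0. Then for n ≥ 2 the 1-form ζₙ is exact: ζₙ = d Iₙ with Iₙ := (1/(1−n)) ζ_{n−1}(y₁), using Cartan's formula L_{y₁}ζ_{n−1} = d(i_{y₁}ζ_{n−1}) + i_{y₁}dζ_{n−1}. -/

import Mathlib

/-- The differential of a 1-form: `dζ(x,y) = x(ζ(y)) − y(ζ(x)) − ζ([x,y])`. -/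
def ceDiff1 {F X : Type*} [Ring F] [LieRing X]
    (ρ : X → F → F) (ζ : X → F) : X → X → F :=
  fun x y => ρ x (ζ y) - ρ y (ζ x) - ζ ⁅x, y⁆

/-- If `ζₙ = i_{Rⁿx₀}Ω₀` are closed 1-forms satisfying
`L_{yₘ}ζₙ = (1−m−n)ζ_{m+n}` for `m ≥ 1`, `n ≥ 0` (with
`L_yζ = i_y dζ + d(i_yζ)`, Cartan's formula), then for `n ≥ 2` the 1-form
`ζₙ` is exact: `ζₙ = dIₙ` with `Iₙ = (1/(1−n)) ζ_{n−1}(y₁)`. -/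
theorem exactness_of_zeta
    {F X : Type*} [CommRing F] [Algebra ℝ F] [LieRing X] [LieAlgebra ℝ X]
    [Module F X]
    (ρ : X → F → F)
    (hρadd : ∀ (x : X) (a b : F), ρ x (a + b) = ρ x a + ρ x b)
    (hρderiv : ∀ (x : X) (a b : F), ρ x (a * b) = ρ x a * b + a * ρ x b)
    (hρlie : ∀ (x y : X) (a : F), ρ ⁅x, y⁆ a = ρ x (ρ y a) - ρ y (ρ x a))
    (hρsmul : ∀ (x : X) (c : ℝ) (a : F), ρ x (c • a) = c • ρ x a)
    (R : X →ₗ[F] X) (Ω : X →ₗ[F] X →ₗ[F] F)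
    (x₀ : X) (y : ℕ → X) (ζ : ℕ → X → F)
    -- ζₙ = i_{xₙ}Ω₀ with xₙ = Rⁿx₀
    (hζ : ∀ (n : ℕ) (v : X), ζ n v = Ω ((R ^ n) x₀) v)
    -- the 1-forms ζₙ are closed
    (hclosed : ∀ (n : ℕ) (a b : X), ceDiff1 ρ (ζ n) a b = 0)
    -- L_{yₘ}ζₙ = (1 − m − n) ζ_{m+n} for m ≥ 1, n ≥ 0 (Cartan's formula)
    (hL : ∀ (m n : ℕ), 1 ≤ m → ∀ x : X,
      ceDiff1 ρ (ζ n) (y m) x + ρ x (ζ n (y m))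
        = ((1 : ℝ) - (m : ℝ) - (n : ℝ)) • ζ (m + n) x) :
    ∀ n : ℕ, 2 ≤ n → ∀ x : X,
      ζ n x = ρ x (((1 : ℝ) / (1 - (n : ℝ))) • ζ (n - 1) (y 1)) := by
  intro n hn x
  have h := hL 1 (n - 1) le_rfl x
  rw [hclosed (n - 1) (y 1) x, zero_add] at h
  have hn1 : 1 + (n - 1) = n := by omega
  have hcast : ((n - 1 : ℕ) : ℝ) = (n : ℝ) - 1 := by
    rw [Nat.cast_sub (by omega)]; simp
  rw [hn1, hcast] at h
  rw [hρsmul, h, smul_smul]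
  have hne : (1 : ℝ) - (n : ℝ) ≠ 0 := by
    have : (2 : ℝ) ≤ (n : ℝ) := by exact_mod_cast hn
    linarith
  have h1 : (1 : ℝ) / (1 - (n : ℝ)) * ((1 : ℝ) - ((1 : ℕ) : ℝ) - ((n : ℝ) - 1)) = 1 := by
    push_cast
    field_simp
    ring
  rw [h1, one_smul]
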